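/- Let u(t) = min_{1≤i≤I} (a_i t + α_i) with a_i ≥ 0 be a concave piecewise linear utility, and let f(x,ω) = p(x,ω) - q(x,ω) with p(·,ω), q(·,ω) convex on a convex set D. Then for each ω and η, u(f(x,ω) - η) = (Σᵢ a_i) p(x,ω) - max_{1≤i≤I} { (Σ_{i'≠i} a_{i'}) p(x,ω) + a_i (q(x,ω) + η) - α_i }, where the max term is jointly convex in (x,η). -/

import Mathlib

lemma const_sub_inf' {ι : Type*} {s : Finset ι} (h : s.Nonempty) (f : ι → ℝ) (c : ℝ) :
    c - s.inf' h f = s.sup' h (fun i => c - f i) := by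
  induction h using Finset.Nonempty.cons_induction with
  | singleton i => simp
  | cons i s hi hs ih =>
    rw [Finset.inf'_cons (H := hs), Finset.sup'_cons (H := hs), ← ih, min_def, max_def]
    split_ifs <;> linarith

lemma convexOn_sup' {E : Type*} [AddCommGroup E] [Module ℝ E] {s : Set E} {ι : Type*}
    {t : Finset ι} (ht : t.Nonempty) (f : ι → E → ℝ)
    (hf : ∀ i ∈ t, ConvexOn ℝ s (f i)) :
    ConvexOn ℝ s (fun x => t.sup' ht (fun i => f i x)) := by
  induction ht using Finset.Nonempty.cons_induction with
  | singleton i =>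
    simpa only [Finset.sup'_singleton] using hf i (Finset.mem_singleton_self i)
  | cons i t hi hne ih =>
    simp only [Finset.sup'_cons hne]
    exact (hf i (by simp)).sup (ih fun j hj => hf j (Finset.mem_cons_of_mem hj))

theorem oce_utility_identity (n I : ℕ) (Ω : Type*) (D : Set (Fin n → ℝ))
    (hD : Convex ℝ D)
    (a α : Fin (I + 1) → ℝ) (ha : ∀ i, 0 ≤ a i)
    (p q : (Fin n → ℝ) → Ω → ℝ)
    (hp : ∀ ω, ConvexOn ℝ D (fun x => p x ω))
    (hq : ∀ ω, ConvexOn ℝ D (fun x => q x ω)) :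
    (∀ ω, ∀ η : ℝ, ∀ x ∈ D,
      (Finset.univ.inf' Finset.univ_nonempty
          (fun i => a i * (p x ω - q x ω - η) + α i)) =
        (∑ i, a i) * p x ω -
          Finset.univ.sup' Finset.univ_nonempty
            (fun i => (∑ i' ∈ Finset.univ.erase i, a i') * p x ω
              + a i * (q x ω + η) - α i)) ∧
    (∀ ω, ConvexOn ℝ (D ×ˢ (Set.univ : Set ℝ))
      (fun xη : (Fin n → ℝ) × ℝ =>
        Finset.univ.sup' Finset.univ_nonempty
          (fun i => (∑ i' ∈ Finset.univ.erase i, a i') * p xη.1 ω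
            + a i * (q xη.1 ω + xη.2) - α i))) := by
  constructor
  · intro ω η x hx
    have hcongr := Finset.sup'_congr (Finset.univ_nonempty (α := Fin (I+1)))
      (f := fun i => (∑ i' ∈ Finset.univ.erase i, a i') * p x ω + a i * (q x ω + η) - α i)
      (g := fun i => (∑ i, a i) * p x ω - (a i * (p x ω - q x ω - η) + α i)) rfl
      (fun i _ => by rw [Finset.sum_erase_eq_sub (Finset.mem_univ i)]; ring)
    rw [hcongr, ← const_sub_inf']
    ring
  · intro ω
    apply convexOn_sup'
    intro i _
    have hc : (0:ℝ) ≤ ∑ i' ∈ Finset.univ.erase i, a i' :=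
      Finset.sum_nonneg fun j _ => ha j
    refine ⟨hD.prod convex_univ, ?_⟩
    rintro ⟨x, ηx⟩ hx ⟨y, ηy⟩ hy s t hs ht hst
    simp only [Prod.smul_fst, Prod.smul_snd, Prod.fst_add, Prod.snd_add, smul_eq_mul]
    have hp' := (hp ω).2 hx.1 hy.1 hs ht hst
    have hq' := (hq ω).2 hx.1 hy.1 hs ht hst
    simp only [smul_eq_mul] at hp' hq'
    have h1 : (∑ i' ∈ Finset.univ.erase i, a i') * p (s • x + t • y) ω ≤
        (∑ i' ∈ Finset.univ.erase i, a i') * (s * p x ω + t * p y ω) :=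
      mul_le_mul_of_nonneg_left hp' hc
    have h2 : a i * q (s • x + t • y) ω ≤ a i * (s * q x ω + t * q y ω) :=
      mul_le_mul_of_nonneg_left hq' (ha i)
    have hα : s * α i + t * α i = α i := by rw [← add_mul, hst, one_mul]
    nlinarith [h1, h2, hα]
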